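/- Let X be a topological space and let (X_i)_{i ∈ I} be a finite stratification of X with I nonempty, ordered by the strict partial order i < j iff i ≠ j and X_i ⊆ closure(X_j). Let J ⊆ I be the set of non-maximal indices and let Z = ⋃_{i ∈ J} X_i (the complement in X of the union of the maximal strata). Then the family (X_i)_{i ∈ J} is a finite stratification of the closed subspace Z: the X_i for i ∈ J are pairwise disjoint nonempty locally closed subsets of Z covering Z, their closures in Z equal their closures in X, and the frontier condition holds for (X_i)_{i ∈ J} in Z. -/
import Mathlib


/-- A finite stratification of a topological space `X`: a family of pairwise disjoint
nonempty locally closed subsets whose union is `X`, satisfying the frontier condition. -/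
def IsFiniteStratification {X : Type*} [TopologicalSpace X] {I : Type*} (S : I → Set X) : Prop :=
  (∀ i, (S i).Nonempty) ∧
  (∀ i, IsLocallyClosed (S i)) ∧
  (Pairwise fun i j => Disjoint (S i) (S j)) ∧
  (⋃ i, S i = Set.univ) ∧
  (∀ i j, (S i ∩ closure (S j)).Nonempty → S i ⊆ closure (S j))

/-- The relation `i < j` iff `i ≠ j` and `X_i ⊆ closure (X_j)`. -/
def stratLT {X : Type*} [TopologicalSpace X] {I : Type*} (S : I → Set X) (i j : I) : Prop :=
  i ≠ j ∧ S i ⊆ closure (S j)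

/-- Let `J` be the set of non-maximal indices and `Z = ⋃ i ∈ J, X_i` (the complement of the
union of the maximal strata). Then `Z` is closed, and the family `(X_i)_{i ∈ J}` is a finite
stratification of the subspace `Z`: the strata are pairwise disjoint nonempty locally closed
subsets of `Z` covering `Z`, their closures in `Z` equal their closures in `X`, and the
frontier condition holds in `Z`. -/
theorem restriction_to_nonmaximal_is_stratification
    {X I : Type*} [TopologicalSpace X] [Finite I] [Nonempty I]
    (S : I → Set X) (h : IsFiniteStratification S)
    (J : Set I) (hJ : J = {i | ∃ k, stratLT S i k})
    (Z : Set X) (hZ : Z = ⋃ i ∈ J, S i) :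
    IsClosed Z ∧
    (∀ i ∈ J, ((Subtype.val ⁻¹' S i : Set Z)).Nonempty) ∧
    (∀ i ∈ J, IsLocallyClosed (Subtype.val ⁻¹' S i : Set Z)) ∧
    (∀ i ∈ J, ∀ j ∈ J, i ≠ j →
      Disjoint (Subtype.val ⁻¹' S i : Set Z) (Subtype.val ⁻¹' S j)) ∧
    (⋃ i ∈ J, (Subtype.val ⁻¹' S i : Set Z)) = Set.univ ∧
    (∀ i ∈ J, Subtype.val '' closure (Subtype.val ⁻¹' S i : Set Z) = closure (S i)) ∧
    (∀ i ∈ J, ∀ j ∈ J,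
      ((Subtype.val ⁻¹' S i : Set Z) ∩ closure (Subtype.val ⁻¹' S j)).Nonempty →
      (Subtype.val ⁻¹' S i : Set Z) ⊆ closure (Subtype.val ⁻¹' S j : Set Z)) := by
  obtain ⟨hne, hlc, hdisj, hcov, hfr⟩ := h
  have hSZ : ∀ i ∈ J, S i ⊆ Z := fun i hi => hZ ▸ Set.subset_biUnion_of_mem hi
  have hclZ : ∀ i ∈ J, closure (S i) ⊆ Z := by
    intro i hi x hx
    have hx' : x ∈ ⋃ j, S j := hcov ▸ Set.mem_univ x
    obtain ⟨j, hj⟩ := Set.mem_iUnion.mp hx'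
    have hsub : S j ⊆ closure (S i) := hfr j i ⟨x, hj, hx⟩
    by_cases hji : j = i
    · exact hSZ i hi (hji ▸ hj)
    · exact hSZ j (hJ ▸ ⟨i, hji, hsub⟩) hj
  have hZcl : IsClosed Z := by
    have hZeq : Z = ⋃ i ∈ J, closure (S i) := by
      apply Set.Subset.antisymm
      · rw [hZ]; exact Set.iUnion₂_mono fun i _ => subset_closure
      · exact Set.iUnion₂_subset hclZ
    rw [hZeq]
    exact (Set.toFinite J).isClosed_biUnion fun i _ => isClosed_closure
  have hpre : ∀ i ∈ J, closure (Subtype.val ⁻¹' S i : Set Z)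
      = Subtype.val ⁻¹' closure (S i) := by
    intro i hi
    ext x
    rw [closure_subtype, Subtype.image_preimage_coe, Set.mem_preimage,
      Set.inter_eq_right.mpr (hSZ i hi)]
  refine ⟨hZcl, ?_, ?_, ?_, ?_, ?_, ?_⟩
  · intro i hi
    obtain ⟨x, hx⟩ := hne i
    exact ⟨⟨x, hSZ i hi hx⟩, hx⟩
  · exact fun i _ => (hlc i).preimage continuous_subtype_val
  · exact fun i _ j _ hij => (hdisj hij).preimage _
  · ext z
    simp only [Set.mem_iUnion, Set.mem_univ, iff_true, Set.mem_preimage]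
    have hz : (z : X) ∈ ⋃ i ∈ J, S i := subset_of_eq hZ z.2
    obtain ⟨i, hi, hzi⟩ := Set.mem_iUnion₂.mp hz
    exact ⟨i, hi, hzi⟩
  · intro i hi
    rw [hpre i hi, Subtype.image_preimage_coe, Set.inter_eq_right.mpr (hclZ i hi)]
  · intro i hi j hj ⟨z, hzi, hzj⟩
    rw [hpre j hj] at hzj ⊢
    exact fun w hw => hfr i j ⟨z.1, hzi, hzj⟩ hw
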